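/- Let δ ≥ 6 be an integer, let 𝐮 be a standard sequence over {a, b} whose slope has a continued fraction expansion of the form θ = [0, 1, ⌊δ/2⌋, a₃, a₄, …], and let 𝐱_{2δ} = colour(𝐮, (12⋯δ)^ω, (1′2′⋯δ′)^ω). Then for any factor of 𝐱_{2δ} of length 2 both of whose letters belong to {1′, …, δ′}, the distance between any two distinct occurrences of this factor in 𝐱_{2δ} is greater than 4δ−4. -/

import Mathlib

open Filter
open scoped ENNReal

namespace BalancedCE

variable {α : Type*} {β : Type*}

/-- The factor of `v` of length `n` starting at position `i`. -/
def factorAt (v : ℕ → α) (i n : ℕ) : List α := (List.range n).map fun k => v (i + k)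

/-- `u` is a factor of the sequence `v`. -/
def IsFactor (v : ℕ → α) (u : List α) : Prop := ∃ i, factorAt v i u.length = u

/-- The word `w` occurs in the sequence `v` at position `i`. -/
def OccursAt (v : ℕ → α) (w : List α) (i : ℕ) : Prop := factorAt v i w.length = w

/-- A sequence is balanced if counts of each letter in equal-length factors differ by at most 1. -/
def Balanced [DecidableEq α] (v : ℕ → α) : Prop :=
  ∀ (a : α) (u w : List α), IsFactor v u → IsFactor v w → u.length = w.length →
    |(u.count a : ℤ) - (w.count a : ℤ)| ≤ 1

def EventuallyPeriodic (v : ℕ → α) : Prop :=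
  ∃ p, 0 < p ∧ ∃ N, ∀ n, N ≤ n → v (n + p) = v n

def Recurrent (v : ℕ → α) : Prop :=
  ∀ u : List α, IsFactor v u → ∀ N : ℕ, ∃ i, N ≤ i ∧ OccursAt v u i

/-- `i < j` are consecutive occurrences of the letter `a` in `v`. -/
def ConsecOcc (v : ℕ → α) (a : α) (i j : ℕ) : Prop :=
  i < j ∧ v i = a ∧ v j = a ∧ ∀ k, i < k → k < j → v k ≠ a

/-- `p` is a period of the finite word `z` (i.e. `z` is a prefix of `u^ω` with `|u| = p`). -/
def IsPeriod (z : List α) (p : ℕ) : Prop :=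
  0 < p ∧ ∀ i, i + p < z.length → z[i]? = z[i + p]?

/-- The minimal period of a finite word. -/
noncomputable def minPeriod (z : List α) : ℕ := sInf {p | IsPeriod z p}

/-- The exponent of a finite word: its length divided by its minimal period. -/
noncomputable def expE (z : List α) : ℝ≥0∞ := (z.length : ℝ≥0∞) / (minPeriod z : ℝ≥0∞)

/-- The critical exponent of a sequence: the supremum of exponents of nonempty factors. -/
noncomputable def criticalExponent (v : ℕ → α) : ℝ≥0∞ :=
  ⨆ (z : List α) (_ : IsFactor v z ∧ z ≠ []), expE z

/-- A Pansiot sequence over a `d`-letter alphabet. -/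
def Pansiot (d : ℕ) (v : ℕ → α) : Prop :=
  (∀ i : ℕ, (factorAt v i (d - 1)).Nodup) ∧
  ∀ (a : α) (i j : ℕ), ConsecOcc v a i j → v (i + 1) ≠ v (j + 1)

/-- The letter `a` has frequency `ρ` in the sequence `v`. -/
def HasFreq [DecidableEq α] (v : ℕ → α) (a : α) (ρ : ℝ) : Prop :=
  Tendsto (fun n => ((factorAt v 0 n).count a : ℝ) / n) atTop (nhds ρ)

/-- Factor complexity of a sequence. -/
noncomputable def complexity (v : ℕ → α) (n : ℕ) : ℕ :=
  Set.ncard {u : List α | IsFactor v u ∧ u.length = n}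

/-- Sturmian sequences: aperiodic binary sequences of factor complexity `n + 1`.
Convention: the letter `a` is `false`, the letter `b` is `true`. -/
def Sturmian (u : ℕ → Bool) : Prop :=
  ¬ EventuallyPeriodic u ∧ ∀ n, complexity u n = n + 1

/-- Prepending a letter to a sequence. -/
def consSeq (c : α) (v : ℕ → α) : ℕ → α := fun n =>
  match n with
  | 0 => c
  | Nat.succ m => v m

/-- A standard sequence: a Sturmian sequence `u` such that `a·u` and `b·u` are Sturmian. -/
def IsStandard (u : ℕ → Bool) : Prop :=
  Sturmian u ∧ Sturmian (consSeq false u) ∧ Sturmian (consSeq true u)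

/-- The slope of a binary sequence, with the convention `ρ_b > ρ_a` (`a = false`, `b = true`). -/
def HasSlope (u : ℕ → Bool) (θ : ℝ) : Prop :=
  ∃ ρa ρb : ℝ, HasFreq u false ρa ∧ HasFreq u true ρb ∧ ρa < ρb ∧ θ = ρa / ρb

/-- `θ` has the (infinite) continued fraction expansion `[0; a 1, a 2, a 3, …]`:
there are complete quotients' fractional parts `t n ∈ (0,1)` with `t 0 = θ` and
`1 / t n = a (n+1) + t (n+1)` for all `n`. (The value `a 0` is irrelevant.) -/
def HasCF (θ : ℝ) (a : ℕ → ℕ) : Prop :=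
  ∃ t : ℕ → ℝ, t 0 = θ ∧ ∀ n, 0 < t n ∧ t n < 1 ∧ 1 / t n = (a (n + 1) : ℝ) + t (n + 1)

/-- Number of positions `< n` where `u` takes the value `c`. -/
def countBefore (u : ℕ → Bool) (c : Bool) (n : ℕ) : ℕ :=
  ((List.range n).filter fun i => u i = c).length

/-- The colouring of a binary sequence `u` by `y` (on the `a = false` positions)
and `y'` (on the `b = true` positions). -/
def colour (u : ℕ → Bool) (y : ℕ → α) (y' : ℕ → β) : ℕ → α ⊕ β := fun n =>
  if u n = false then Sum.inl (y (countBefore u false n))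
  else Sum.inr (y' (countBefore u true n))

/-- A constant gap sequence: periodic, and consecutive occurrences of each occurring
letter are at a constant distance. -/
def ConstantGap (y : ℕ → α) : Prop :=
  (∃ p, 0 < p ∧ ∀ n, y (n + p) = y n) ∧
  ∀ c : α, (∃ i, y i = c) → ∃ g, 0 < g ∧ ∀ i j, ConsecOcc y c i j → j - i = g

/-- The discolouration (projection) map: letters of the first alphabet go to `a = false`,
letters of the second alphabet go to `b = true`. -/
def proj : α ⊕ β → Bool := Sum.elim (fun _ => false) (fun _ => true)

/-- `v` is a return word to `w` in the sequence `z`. -/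
def IsReturnWord (z : ℕ → α) (w v : List α) : Prop :=
  ∃ i j : ℕ, i < j ∧ OccursAt z w i ∧ OccursAt z w j ∧
    (∀ k, i < k → k < j → ¬ OccursAt z w k) ∧ v = factorAt z i (j - i)

def RightSpecial (z : ℕ → α) (w : List α) : Prop :=
  ∃ a b : α, a ≠ b ∧ IsFactor z (w ++ [a]) ∧ IsFactor z (w ++ [b])

def LeftSpecial (z : ℕ → α) (w : List α) : Prop :=
  ∃ a b : α, a ≠ b ∧ IsFactor z (a :: w) ∧ IsFactor z (b :: w)

def Bispecial (z : ℕ → α) (w : List α) : Prop := LeftSpecial z w ∧ RightSpecial z w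

/-- `o` enumerates, in increasing order, all occurrences of `w` in `z`. -/
def IsOccEnum (z : ℕ → α) (w : List α) (o : ℕ → ℕ) : Prop :=
  StrictMono o ∧ (∀ n, OccursAt z w (o n)) ∧ ∀ i, OccursAt z w i → ∃ n, o n = i

/-- The derived sequence of `z` with respect to the occurrence enumeration `o` of a factor:
its `n`-th letter is the return word between the `n`-th and `(n+1)`-st occurrences. -/
def derivedSeq (z : ℕ → α) (o : ℕ → ℕ) : ℕ → List α :=
  fun n => factorAt z (o n) (o (n + 1) - o n)

/-- The slope of a sequence over a two-letter alphabet: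
the ratio of the smaller letter frequency to the larger one. -/
def HasSlope2 {γ : Type*} [DecidableEq γ] (z : ℕ → γ) (θ : ℝ) : Prop :=
  ∃ (c c' : γ) (ρ ρ' : ℝ), c ≠ c' ∧ (∀ n, z n = c ∨ z n = c') ∧
    HasFreq z c ρ ∧ HasFreq z c' ρ' ∧ ρ < ρ' ∧ θ = ρ / ρ'

/-- The purely cyclic constant gap sequence `(0 1 ⋯ (δ-1))^ω` over `ZMod δ`. -/
def cyc (δ : ℕ) : ℕ → ZMod δ := fun n => (n : ZMod δ)

/-- The colouring `colour(u, (1 2 ⋯ δ)^ω, (1' 2' ⋯ δ')^ω)` over `2δ` letters. -/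
def colourCyc (δ : ℕ) (u : ℕ → Bool) : ℕ → ZMod δ ⊕ ZMod δ := colour u (cyc δ) (cyc δ)

section Basics

variable {γ : Type*} (v : ℕ → γ)

@[simp] lemma factorAt_length (i n : ℕ) : (factorAt v i n).length = n := by
  simp [factorAt]

lemma factorAt_getElem (i n k : ℕ) (hk : k < n) :
    (factorAt v i n)[k]'(by simpa using hk) = v (i + k) := by
  simp [factorAt]

lemma factorAt_succ (i n : ℕ) :
    factorAt v i (n + 1) = factorAt v i n ++ [v (i + n)] := by
  simp [factorAt, List.range_succ]

lemma factorAt_take (i n : ℕ) :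
    (factorAt v i (n + 1)).take n = factorAt v i n := by
  simp [factorAt_succ, List.take_append, List.take_of_length_le]

lemma isFactor_factorAt (i n : ℕ) : IsFactor v (factorAt v i n) :=
  ⟨i, by simp⟩

lemma factorAt_eq_factorAt_iff (i j n : ℕ) :
    factorAt v i n = factorAt v j n ↔ ∀ k < n, v (i + k) = v (j + k) := by
  constructor
  · intro h k hk
    have := congrArg (fun l => l[k]?) h
    simpa [factorAt, hk] using this
  · intro h
    apply List.ext_getElem (by simp)
    intro k h1 h2
    simp only [factorAt, List.getElem_map, List.getElem_range]
    exact h k (by simpa using h1)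

lemma occursAt_iff (w : List γ) (i : ℕ) :
    OccursAt v w i ↔ ∀ k < w.length, v (i + k) = w.getD k (v 0) := by
  unfold OccursAt
  constructor
  · intro h k hk
    conv_rhs => rw [← h]
    rw [List.getD_eq_getElem _ _ (by simpa using hk)]
    simp [factorAt_getElem _ _ _ _ hk]
  · intro h
    apply List.ext_getElem (by simp)
    intro k h1 h2
    rw [factorAt_getElem _ _ _ _ (by simpa using h1)]
    rw [h k (by simpa using h1), List.getD_eq_getElem]

lemma factorAt_two_gen (i : ℕ) : factorAt v i 2 = [v i, v (i + 1)] := by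
  have : (2 : ℕ) = 0 + 1 + 1 := rfl
  rw [this, factorAt_succ, factorAt_succ]
  simp [factorAt]

end Basics
section Counting

variable (u : ℕ → Bool)

lemma countBefore_eq_card (c : Bool) (n : ℕ) :
    countBefore u c n = ((Finset.range n).filter (fun i => u i = c)).card := rfl

lemma countBefore_succ (c : Bool) (n : ℕ) :
    countBefore u c (n + 1) = countBefore u c n + if u n = c then 1 else 0 := by
  simp only [countBefore_eq_card, Finset.range_add_one, Finset.filter_insert]
  split <;> simp [Finset.card_insert_of_notMem]

lemma countBefore_mono (c : Bool) {n m : ℕ} (h : n ≤ m) :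
    countBefore u c n ≤ countBefore u c m := by
  simp only [countBefore_eq_card]
  exact Finset.card_le_card (Finset.filter_subset_filter _ (by simpa using h))

lemma countBefore_false_add_true (n : ℕ) :
    countBefore u false n + countBefore u true n = n := by
  induction n with
  | zero => simp [countBefore]
  | succ n ih =>
    rw [countBefore_succ, countBefore_succ]
    cases h : u n <;> simp <;> omega

lemma count_factorAt_zero (c : Bool) (n : ℕ) :
    (factorAt u 0 n).count c = countBefore u c n := by
  unfold factorAt countBefore
  rw [List.count, List.countP_map, List.countP_eq_length_filter]
  congr 1
  apply List.filter_congr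
  intro x _
  cases h : u x <;> cases c <;> simp [h]

lemma hasFreq_iff (c : Bool) (ρ : ℝ) :
    HasFreq u c ρ ↔
      Filter.Tendsto (fun n => (countBefore u c n : ℝ) / n) Filter.atTop (nhds ρ) := by
  unfold HasFreq
  constructor <;> intro h <;> [skip; skip] <;>
    · apply h.congr
      intro n
      rw [count_factorAt_zero]

lemma freq_nonneg {c : Bool} {ρ : ℝ} (h : HasFreq u c ρ) : 0 ≤ ρ := by
  rw [hasFreq_iff] at h
  exact ge_of_tendsto' h (fun n => by positivity)

lemma freq_add_eq_one {ρa ρb : ℝ} (ha : HasFreq u false ρa) (hb : HasFreq u true ρb) :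
    ρa + ρb = 1 := by
  rw [hasFreq_iff] at ha hb
  have h := ha.add hb
  have h2 : Filter.Tendsto (fun n : ℕ =>
      (countBefore u false n : ℝ) / n + (countBefore u true n : ℝ) / n)
      Filter.atTop (nhds 1) := by
    apply Filter.Tendsto.congr' _ tendsto_const_nhds
    filter_upwards [Filter.eventually_gt_atTop 0] with n hn
    rw [← add_div]
    rw [← Nat.cast_add, countBefore_false_add_true]
    field_simp
  exact tendsto_nhds_unique h h2

end Counting
section Struct

variable {u : ℕ → Bool}

lemma factorAt_two (i : ℕ) : factorAt u i 2 = [u i, u (i + 1)] := by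
  have : (2 : ℕ) = 0 + 1 + 1 := rfl
  rw [this, factorAt_succ, factorAt_succ]
  simp [factorAt]

lemma factorAt_three (i : ℕ) : factorAt u i 3 = [u i, u (i + 1), u (i + 2)] := by
  have : (3 : ℕ) = 2 + 1 := rfl
  rw [this, factorAt_succ, factorAt_two]
  simp

lemma isFactor_two_iff (x y : Bool) :
    IsFactor u [x, y] ↔ ∃ i, u i = x ∧ u (i + 1) = y := by
  unfold IsFactor
  constructor
  · rintro ⟨i, hi⟩
    rw [show ([x,y] : List Bool).length = 2 from rfl, factorAt_two] at hi
    exact ⟨i, by simpa using hi⟩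
  · rintro ⟨i, hx, hy⟩
    exact ⟨i, by rw [show ([x,y] : List Bool).length = 2 from rfl, factorAt_two, hx, hy]⟩

lemma isFactor_three_iff (x y z : Bool) :
    IsFactor u [x, y, z] ↔ ∃ i, u i = x ∧ u (i + 1) = y ∧ u (i + 2) = z := by
  unfold IsFactor
  constructor
  · rintro ⟨i, hi⟩
    rw [show ([x,y,z] : List Bool).length = 3 from rfl, factorAt_three] at hi
    exact ⟨i, by simpa using hi⟩
  · rintro ⟨i, hx, hy, hz⟩
    exact ⟨i, by rw [show ([x,y,z] : List Bool).length = 3 from rfl, factorAt_three,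
      hx, hy, hz]⟩

lemma card_le_complexity (n : ℕ) (s : Finset (List Bool))
    (hs : ∀ z ∈ s, IsFactor u z ∧ z.length = n) : s.card ≤ complexity u n := by
  unfold complexity
  rw [← Set.ncard_coe_finset]
  exact Set.ncard_le_ncard (fun z hz => hs z (by exact_mod_cast hz))
    (Set.Finite.subset (List.finite_length_eq Bool n) (fun z hz => hz.2))

lemma evPeriodic_of_tail_const (N : ℕ) (c : Bool) (h : ∀ n, N ≤ n → u n = c) :
    EventuallyPeriodic u :=
  ⟨1, one_pos, N, fun n hn => by rw [h n hn, h (n+1) (by omega)]⟩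

lemma all_after_of_step (k : ℕ) (c : Bool) (hk : u k = c)
    (hstep : ∀ m, k ≤ m → u m = c → u (m + 1) = c) : ∀ n, k ≤ n → u n = c := by
  intro n hn
  induction n with
  | zero => have : k = 0 := by omega
            rw [← this]; exact hk
  | succ m ih =>
    by_cases hkm : k ≤ m
    · exact hstep m hkm (ih hkm)
    · have : k = m + 1 := by omega
      rw [← this]; exact hk

lemma freq_mul_le_of_count_le {c c' : Bool} {ρ ρ' : ℝ} (hc : HasFreq u c ρ)
    (hc' : HasFreq u c' ρ') (A B K : ℕ)
    (h : ∀ n, A * countBefore u c n ≤ B * countBefore u c' n + K) :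
    (A : ℝ) * ρ ≤ B * ρ' := by
  rw [hasFreq_iff] at hc hc'
  have hK : Filter.Tendsto (fun n : ℕ => (K : ℝ) / n) Filter.atTop (nhds 0) :=
    tendsto_const_div_atTop_nhds_zero_nat (K : ℝ)
  have h1 : Filter.Tendsto (fun n : ℕ => (A : ℝ) * ((countBefore u c n : ℝ) / n))
      Filter.atTop (nhds ((A : ℝ) * ρ)) := hc.const_mul _
  have h2 : Filter.Tendsto
      (fun n : ℕ => (B : ℝ) * ((countBefore u c' n : ℝ) / n) + (K : ℝ) / n)
      Filter.atTop (nhds ((B : ℝ) * ρ' + 0)) := (hc'.const_mul _).add hK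
  rw [add_zero] at h2
  refine le_of_tendsto_of_tendsto h1 h2 ?_
  filter_upwards [Filter.eventually_ge_atTop 1] with n hn
  have hn' : (0 : ℝ) < n := by exact_mod_cast hn
  have hcast : ((A : ℝ) * countBefore u c n) ≤ (B : ℝ) * countBefore u c' n + K := by
    exact_mod_cast h n
  calc (A : ℝ) * ((countBefore u c n : ℝ) / n) = (A * countBefore u c n : ℝ) / n := by ring
  _ ≤ ((B : ℝ) * countBefore u c' n + K) / n := by gcongr
  _ = (B : ℝ) * ((countBefore u c' n : ℝ) / n) + (K : ℝ) / n := by ring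

end Struct
section Forbidden

variable {u : ℕ → Bool} {ρa ρb : ℝ}

lemma bool_eq_false {b : Bool} (h : b ≠ true) : b = false := by
  cases b with
  | false => rfl
  | true => exact absurd rfl h

lemma bool_eq_true {b : Bool} (h : b ≠ false) : b = true := by
  cases b with
  | false => exact absurd rfl h
  | true => rfl

lemma ab_factor (hap : ¬ EventuallyPeriodic u) :
    ∃ i, u i = false ∧ u (i + 1) = true := by
  by_contra h
  push_neg at h
  have hstep : ∀ m, 0 ≤ m → u m = false → u (m + 1) = false := by
    intro m _ hm
    cases h' : u (m + 1)
    · rfl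
    · exact absurd h' (h m hm)
  by_cases hf : ∃ i, u i = false
  · obtain ⟨i, hi⟩ := hf
    exact hap (evPeriodic_of_tail_const i false
      (all_after_of_step i false hi (fun m _ => hstep m m.zero_le)))
  · push_neg at hf
    exact hap (evPeriodic_of_tail_const 0 true
      (fun n _ => bool_eq_true (hf n)))

lemma ba_factor (hap : ¬ EventuallyPeriodic u) :
    ∃ i, u i = true ∧ u (i + 1) = false := by
  by_contra h
  push_neg at h
  have hstep : ∀ m, 0 ≤ m → u m = true → u (m + 1) = true := by
    intro m _ hm
    cases h' : u (m + 1)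
    · exact absurd h' (h m hm)
    · rfl
  by_cases hf : ∃ i, u i = true
  · obtain ⟨i, hi⟩ := hf
    exact hap (evPeriodic_of_tail_const i true
      (all_after_of_step i true hi (fun m _ => hstep m m.zero_le)))
  · push_neg at hf
    exact hap (evPeriodic_of_tail_const 0 false
      (fun n _ => bool_eq_false (hf n)))

/-- `aa` is not a factor: every `a` is followed by `b`. -/
lemma noAA (hap : ¬ EventuallyPeriodic u) (hcomp : ∀ n, complexity u n = n + 1)
    (hfa : HasFreq u false ρa) (hfb : HasFreq u true ρb) (hab : ρa < ρb) :
    ∀ k, u k = false → u (k + 1) = true := by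
  by_contra h
  push_neg at h
  obtain ⟨k, hk0, hk1⟩ := h
  replace hk1 := bool_eq_false hk1
  have hbbnot : ∀ m, ¬(u m = true ∧ u (m + 1) = true) := by
    intro m hm
    have h4 : (4 : ℕ) ≤ complexity u 2 := by
      have := card_le_complexity (u := u) 2
        {[false, false], [false, true], [true, false], [true, true]} ?_
      · simpa using this
      · intro z hz
        simp only [Finset.mem_insert, Finset.mem_singleton] at hz
        obtain ⟨i, hi1, hi2⟩ := ab_factor hap
        obtain ⟨i', hi1', hi2'⟩ := ba_factor hap
        rcases hz with rfl | rfl | rfl | rfl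
        · exact ⟨(isFactor_two_iff _ _).mpr ⟨k, hk0, hk1⟩, rfl⟩
        · exact ⟨(isFactor_two_iff _ _).mpr ⟨i, hi1, hi2⟩, rfl⟩
        · exact ⟨(isFactor_two_iff _ _).mpr ⟨i', hi1', hi2'⟩, rfl⟩
        · exact ⟨(isFactor_two_iff _ _).mpr ⟨m, hm.1, hm.2⟩, rfl⟩
    rw [hcomp 2] at h4
    omega
  have key : ∀ n, countBefore u true n ≤ countBefore u false n + 1 := by
    intro n
    have h1 : countBefore u true n ≤ countBefore u false (n + 1) := by
      rw [countBefore_eq_card, countBefore_eq_card]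
      apply Finset.card_le_card_of_injOn (fun k => k + 1)
      · intro x hx
        simp only [Finset.coe_filter, Finset.mem_coe, Finset.mem_filter, Finset.mem_range, Set.mem_setOf_eq] at hx ⊢
        refine ⟨by omega, ?_⟩
        cases h' : u (x + 1)
        · rfl
        · exact absurd ⟨hx.2, h'⟩ (hbbnot x)
      · intro a _ b _ hab'
        simpa using hab'
    have h2 : countBefore u false (n + 1) ≤ countBefore u false n + 1 := by
      rw [countBefore_succ]
      split <;> omega
    omega
  have := freq_mul_le_of_count_le hfb hfa 1 1 1 (by simpa using key)
  simp at this
  linarith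

/-- `bbb` is not a factor. -/
lemma noBBB (hap : ¬ EventuallyPeriodic u) (hcomp : ∀ n, complexity u n = n + 1)
    (hfa : HasFreq u false ρa) (hfb : HasFreq u true ρb) (hab : ρa < ρb)
    (h2a : ρb < 2 * ρa) (hbb : ∃ k, u k = true ∧ u (k + 1) = true) :
    ∀ k, ¬(u k = true ∧ u (k + 1) = true ∧ u (k + 2) = true) := by
  have hAA := noAA hap hcomp hfa hfb hab
  intro k0 hk0
  -- abb is a factor
  have habb : ∃ i, u i = false ∧ u (i + 1) = true ∧ u (i + 2) = true := by
    by_contra h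
    push_neg at h
    by_cases hf : ∃ i, u i = false
    · obtain ⟨i, hi⟩ := hf
      have hpat : ∀ s, u (i + 2 * s) = false ∧ u (i + 2 * s + 1) = true := by
        intro s
        induction s with
        | zero => exact ⟨by simpa using hi, by simpa using hAA i hi⟩
        | succ s ih =>
          have h1 : u (i + 2 * s + 2) = false := by
            cases h' : u (i + 2 * s + 2)
            · rfl
            · exact absurd h' (h _ ih.1 ih.2)
          have h2 : u (i + 2 * s + 3) = true := hAA _ h1
          constructor
          · have : i + 2 * (s + 1) = i + 2 * s + 2 := by ring
            rw [this]; exact h1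
          · have : i + 2 * (s + 1) + 1 = i + 2 * s + 3 := by ring
            rw [this]; exact h2
      refine hap ⟨2, by norm_num, i, fun n hn => ?_⟩
      obtain ⟨d, rfl⟩ := Nat.exists_eq_add_of_le hn
      rcases Nat.even_or_odd d with ⟨s, rfl⟩ | ⟨s, rfl⟩
      · rw [show i + (s + s) + 2 = i + 2 * (s + 1) from by ring,
          show i + (s + s) = i + 2 * s from by ring, (hpat (s + 1)).1, (hpat s).1]
      · rw [show i + (2 * s + 1) + 2 = i + 2 * (s + 1) + 1 from by ring,
          show i + (2 * s + 1) = i + 2 * s + 1 from by ring, (hpat (s + 1)).2, (hpat s).2]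
    · push_neg at hf
      exact hap (evPeriodic_of_tail_const 0 true (fun n _ => bool_eq_true (hf n)))
  -- bab is a factor
  have hbab : ∃ i, u i = true ∧ u (i + 1) = false ∧ u (i + 2) = true := by
    obtain ⟨i, hi1, hi2⟩ := ba_factor hap
    exact ⟨i, hi1, hi2, hAA _ hi2⟩
  -- bba is a factor
  have hbba : ∃ i, u i = true ∧ u (i + 1) = true ∧ u (i + 2) = false := by
    by_contra h
    push_neg at h
    obtain ⟨m, hm1, hm2⟩ := hbb
    have hall : ∀ n, m ≤ n → u n = true := by
      have hstep : ∀ s, u (m + s) = true ∧ u (m + s + 1) = true := by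
        intro s
        induction s with
        | zero => exact ⟨by simpa using hm1, by simpa using hm2⟩
        | succ s ih =>
          have h1 : u (m + s + 2) = true := by
            cases h' : u (m + s + 2)
            · exact absurd h' (by simpa using h _ ih.1 ih.2)
            · rfl
          exact ⟨by rw [show m + (s+1) = m + s + 1 by ring]; exact ih.2,
                 by rw [show m + (s+1) + 1 = m + s + 2 by ring]; exact h1⟩
      intro n hn
      obtain ⟨d, rfl⟩ := Nat.exists_eq_add_of_le hn
      exact (hstep d).1
    exact hap (evPeriodic_of_tail_const m true hall)
  -- aba is not a factor (else count argument kills the slope)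
  have haba : ∃ i, u i = false ∧ u (i + 1) = true ∧ u (i + 2) = false := by
    by_contra h
    push_neg at h
    have hatt : ∀ i, u i = false → u (i + 1) = true ∧ u (i + 2) = true := by
      intro i hi
      have h1 := hAA i hi
      refine ⟨h1, ?_⟩
      cases h' : u (i + 2)
      · exact absurd h' (by simpa using h i hi h1)
      · rfl
    -- 2 * countBefore false n ≤ countBefore true n + 2
    have key : ∀ n, 2 * countBefore u false n ≤ 1 * countBefore u true n + 2 := by
      intro n
      have h1 : 2 * countBefore u false n ≤ countBefore u true (n + 2) := by
        rw [countBefore_eq_card, countBefore_eq_card]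
        have hsub1 : ((Finset.range n).filter (fun i => u i = false)).image (· + 1) ⊆
            (Finset.range (n + 2)).filter (fun i => u i = true) := by
          intro x hx
          simp only [Finset.mem_image, Finset.mem_filter, Finset.mem_range] at hx ⊢
          obtain ⟨a, ⟨ha1, ha2⟩, rfl⟩ := hx
          exact ⟨by omega, (hatt a ha2).1⟩
        have hsub2 : ((Finset.range n).filter (fun i => u i = false)).image (· + 2) ⊆
            (Finset.range (n + 2)).filter (fun i => u i = true) := by
          intro x hx
          simp only [Finset.mem_image, Finset.mem_filter, Finset.mem_range] at hx ⊢
          obtain ⟨a, ⟨ha1, ha2⟩, rfl⟩ := hx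
          exact ⟨by omega, (hatt a ha2).2⟩
        have hdisj : Disjoint
            (((Finset.range n).filter (fun i => u i = false)).image (· + 1))
            (((Finset.range n).filter (fun i => u i = false)).image (· + 2)) := by
          rw [Finset.disjoint_left]
          intro x hx1 hx2
          simp only [Finset.mem_image, Finset.mem_filter, Finset.mem_range] at hx1 hx2
          obtain ⟨a, ⟨_, ha⟩, rfl⟩ := hx1
          obtain ⟨b, ⟨_, hb⟩, hba⟩ := hx2
          have : b + 1 = a := by omega
          rw [← this] at ha
          have := hAA b hb
          rw [this] at ha
          exact Bool.true_eq_false.mp ha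
        calc 2 * ((Finset.range n).filter (fun i => u i = false)).card
            = (((Finset.range n).filter (fun i => u i = false)).image (· + 1)).card
              + (((Finset.range n).filter (fun i => u i = false)).image (· + 2)).card := by
              rw [Finset.card_image_of_injective _ (add_left_injective 1),
                Finset.card_image_of_injective _ (add_left_injective 2)]
              ring
          _ = ((((Finset.range n).filter (fun i => u i = false)).image (· + 1)) ∪
               (((Finset.range n).filter (fun i => u i = false)).image (· + 2))).card := by
              rw [Finset.card_union_of_disjoint hdisj]
          _ ≤ _ := Finset.card_le_card (Finset.union_subset hsub1 hsub2)
      have h2 := countBefore_succ u true n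
      have h3 := countBefore_succ u true (n + 1)
      have h4 : countBefore u true (n + 2) ≤ countBefore u true n + 2 := by
        rw [h3, h2]
        split <;> split <;> omega
      omega
    have := freq_mul_le_of_count_le hfa hfb 2 1 2 key
    simp at this
    linarith
  -- now all five words are factors: contradiction with complexity 3 = 4
  have h5 : (5 : ℕ) ≤ complexity u 3 := by
    have := card_le_complexity (u := u) 3
      {[false, true, false], [false, true, true], [true, false, true],
       [true, true, false], [true, true, true]} ?_
    · simpa using this
    · intro z hz
      simp only [Finset.mem_insert, Finset.mem_singleton] at hz
      obtain ⟨i1, hi1⟩ := haba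
      obtain ⟨i2, hi2⟩ := habb
      obtain ⟨i3, hi3⟩ := hbab
      obtain ⟨i4, hi4⟩ := hbba
      rcases hz with rfl | rfl | rfl | rfl | rfl
      · exact ⟨(isFactor_three_iff _ _ _).mpr ⟨i1, hi1⟩, rfl⟩
      · exact ⟨(isFactor_three_iff _ _ _).mpr ⟨i2, hi2⟩, rfl⟩
      · exact ⟨(isFactor_three_iff _ _ _).mpr ⟨i3, hi3⟩, rfl⟩
      · exact ⟨(isFactor_three_iff _ _ _).mpr ⟨i4, hi4⟩, rfl⟩
      · exact ⟨(isFactor_three_iff _ _ _).mpr ⟨k0, hk0⟩, rfl⟩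
  rw [hcomp 3] at h5
  omega

end Forbidden
section Slope

variable {u : ℕ → Bool}

lemma slope_package (δ : ℕ) (hδ : 6 ≤ δ) (θ : ℝ) (hθ : HasSlope u θ)
    (a : ℕ → ℕ) (hcf : HasCF θ a) (ha1 : a 1 = 1) (ha2 : a 2 = δ / 2) :
    ∃ ρa ρb : ℝ, HasFreq u false ρa ∧ HasFreq u true ρb ∧ ρa < ρb ∧ ρb < 2 * ρa ∧
      (((δ / 2 : ℕ) : ℝ) + 2) / (2 * ((δ / 2 : ℕ) : ℝ) + 3) < ρb ∧
      ρb < (((δ / 2 : ℕ) : ℝ) + 1) / (2 * ((δ / 2 : ℕ) : ℝ) + 1) := by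
  obtain ⟨ρa, ρb, hfa, hfb, hab, hθeq⟩ := hθ
  obtain ⟨t, ht0, htp⟩ := hcf
  set A : ℝ := ((δ / 2 : ℕ) : ℝ) with hA
  have hA3 : (3 : ℝ) ≤ A := by
    rw [hA]
    exact_mod_cast Nat.le_div_iff_mul_le (by norm_num) |>.mpr (by omega)
  have ht1pos : 0 < t 1 := (htp 1).1
  have ht1lt : t 1 < 1 := (htp 1).2.1
  have ht2pos : 0 < t 2 := (htp 2).1
  have ht2lt : t 2 < 1 := (htp 2).2.1
  have hθpos : 0 < θ := ht0 ▸ (htp 0).1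
  have hrec0 : 1 / θ = 1 + t 1 := by
    have := (htp 0).2.2
    rw [ht0, ha1] at this
    simpa using this
  have hrec1 : 1 / t 1 = A + t 2 := by
    have := (htp 1).2.2
    rw [ha2] at this
    exact this
  -- bounds on t 1
  have ht1ub : t 1 < 1 / A := by
    have h1 : A < 1 / t 1 := by rw [hrec1]; linarith
    have h2 : A * t 1 < 1 := by
      have := (lt_div_iff₀ ht1pos).mp h1
      linarith
    rw [lt_div_iff₀ (by linarith : (0:ℝ) < A)]
    linarith [mul_comm A (t 1)]
  have ht1lb : 1 / (A + 1) < t 1 := by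
    have h1 : 1 / t 1 < A + 1 := by rw [hrec1]; linarith
    have h2 : 1 < t 1 * (A + 1) := by
      have := (div_lt_iff₀ ht1pos).mp h1
      linarith
    rw [div_lt_iff₀ (by linarith : (0:ℝ) < A + 1)]
    linarith
  -- frequencies
  have hρa0 : 0 ≤ ρa := freq_nonneg u hfa
  have hρb0 : 0 < ρb := lt_of_le_of_lt hρa0 hab
  have hsum : ρa + ρb = 1 := freq_add_eq_one u hfa hfb
  have hθval : θ = 1 / (1 + t 1) := by
    field_simp at hrec0 ⊢
    linarith [hrec0]
  have hρaρb : ρa = θ * ρb := by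
    rw [hθeq]
    field_simp
  have hρbval : ρb = (1 + t 1) / (2 + t 1) := by
    have h1 : θ * ρb + ρb = 1 := by rw [← hρaρb]; exact hsum
    have h2 : ρb * (1 + θ) = 1 := by linarith [mul_comm θ ρb]
    rw [hθval] at h2
    have h3 : (0:ℝ) < 1 + t 1 := by linarith
    field_simp at h2
    field_simp
    linarith
  refine ⟨ρa, ρb, hfa, hfb, hab, ?_, ?_, ?_⟩
  · -- ρb < 2 ρa
    have : ρa = 1 / (2 + t 1) := by
      rw [hρbval] at hsum
      have h3 : (0:ℝ) < 2 + t 1 := by linarith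
      field_simp at hsum ⊢
      linarith
    have h3 : (0:ℝ) < 2 + t 1 := by linarith
    rw [this, hρbval, show (2:ℝ) * (1 / (2 + t 1)) = 2 / (2 + t 1) from by ring,
      div_lt_div_iff₀ h3 h3]
    nlinarith
  · rw [hρbval, div_lt_div_iff₀ (by linarith) (by linarith)]
    have := (div_lt_iff₀ (by linarith : (0:ℝ) < A + 1)).mp ht1lb
    nlinarith
  · rw [hρbval, div_lt_div_iff₀ (by linarith) (by linarith)]
    have := (lt_div_iff₀ (by linarith : (0:ℝ) < A)).mp ht1ub
    nlinarith

end Slope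
section BBStruct

/-- `k` is an occurrence of `bb`. -/
def BB (u : ℕ → Bool) (k : ℕ) : Prop := u k = true ∧ u (k + 1) = true

lemma decide_parity_succ (m : ℕ) : decide ((m + 1) % 2 = 1) = !decide (m % 2 = 1) := by
  rcases Nat.mod_two_eq_zero_or_one m with h | h
  · have h2 : (m + 1) % 2 = 1 := by omega
    rw [h, h2]
    simp
  · have h2 : (m + 1) % 2 = 0 := by omega
    rw [h, h2]
    simp

variable {u : ℕ → Bool}

/-- Two consecutive occurrences of `bb` with the alternation pattern between them. -/
lemma gap_structure (hAA : ∀ k, u k = false → u (k + 1) = true)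
    (hBBB : ∀ k, ¬(u k = true ∧ u (k + 1) = true ∧ u (k + 2) = true))
    {k k' : ℕ} (hk : BB u k) (hk' : BB u k') (hlt : k < k')
    (hcons : ∀ t, k < t → t < k' → ¬ BB u t) :
    ∃ γ, 1 ≤ γ ∧ k' = k + 2 * γ + 1 ∧
      ∀ s, 1 ≤ s → s ≤ 2 * γ + 1 → u (k + s) = decide (s % 2 = 1) := by
  have halt : ∀ t, k + 1 ≤ t → t < k' → u (t + 1) = ! u t := by
    intro t ht1 ht2
    cases h1 : u t with
    | false => rw [hAA t h1]; rfl
    | true =>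
      cases h2 : u (t + 1) with
      | false => rfl
      | true => exact absurd ⟨h1, h2⟩ (hcons t (by omega) ht2)
  have hpat : ∀ s, 1 ≤ s → s ≤ k' - k → u (k + s) = decide (s % 2 = 1) := by
    intro s hs1 hs2
    induction s with
    | zero => omega
    | succ m ih =>
      by_cases hm : 1 ≤ m
      · have hu := halt (k + m) (by omega) (by omega)
        rw [show k + (m + 1) = k + m + 1 from by ring, hu, ih hm (by omega),
          decide_parity_succ]
      · have hm0 : m = 0 := by omega
        subst hm0
        rw [show (0 + 1) % 2 = 1 from rfl]
        simpa using hk.2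
  have hd : (k' - k) % 2 = 1 := by
    by_contra h
    have h2 := hpat (k' - k) (by omega) (le_refl _)
    rw [show k + (k' - k) = k' from by omega, hk'.1] at h2
    have h3 : (k' - k) % 2 = 1 := by
      by_contra h4
      rw [show decide ((k' - k) % 2 = 1) = false from by simpa using h4] at h2
      exact Bool.true_eq_false.mp h2
    exact h h3
  have hne1 : k' ≠ k + 1 := by
    intro h
    exact hBBB k ⟨hk.1, hk.2, by rw [show k + 2 = k' + 1 from by omega]; exact hk'.2⟩
  refine ⟨(k' - k - 1) / 2, by omega, by omega, ?_⟩
  intro s hs1 hs2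
  exact hpat s hs1 (by omega)

/-- Count of `b`s between two consecutive `bb` occurrences. -/
lemma gap_count {k γ : ℕ} (hk : u k = true) (hγ : 1 ≤ γ)
    (hpat : ∀ s, 1 ≤ s → s ≤ 2 * γ + 1 → u (k + s) = decide (s % 2 = 1)) :
    countBefore u true (k + 2 * γ + 1) = countBefore u true k + (γ + 1) := by
  have key : ∀ s, 1 ≤ s → s ≤ 2 * γ + 1 →
      countBefore u true (k + s) = countBefore u true k + 1 + s / 2 := by
    intro s hs1 hs2
    induction s with
    | zero => omega
    | succ m ih =>
      by_cases hm : 1 ≤ m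
      · rw [show k + (m + 1) = (k + m) + 1 from by ring, countBefore_succ,
          ih hm (by omega), hpat m hm (by omega)]
        rcases Nat.mod_two_eq_zero_or_one m with h | h
        · rw [show decide (m % 2 = 1) = false from by simpa using by omega]
          simp only [Bool.false_eq_true, if_false]
          omega
        · rw [show decide (m % 2 = 1) = true from by simpa using h]
          simp only [if_true]
          omega
      · have hm0 : m = 0 := by omega
        subst hm0
        rw [countBefore_succ, hk]
        simp
  have h2 := key (2 * γ + 1) (by omega) (le_refl _)
  rw [show k + 2 * γ + 1 = k + (2 * γ + 1) from by ring, h2]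
  omega

end BBStruct
section RightSpecialCount

variable {u : ℕ → Bool}

/-- The set of factors of a given length. -/
def Fset (u : ℕ → Bool) (n : ℕ) : Set (List Bool) :=
  {z | IsFactor u z ∧ z.length = n}

lemma Fset_finite (n : ℕ) : (Fset u n).Finite :=
  (List.finite_length_eq Bool n).subset (fun _ hz => hz.2)

lemma ncard_Fset (hcomp : ∀ n, complexity u n = n + 1) (n : ℕ) :
    (Fset u n).ncard = n + 1 := hcomp n

lemma mem_Fset_of_append {z : List Bool} {c : Bool} {n : ℕ} (h : IsFactor u (z ++ [c]))
    (hl : z.length = n) : z ∈ Fset u n := by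
  obtain ⟨i, hi⟩ := h
  refine ⟨⟨i, ?_⟩, hl⟩
  rw [show (z ++ [c]).length = z.length + 1 from by simp] at hi
  calc factorAt u i z.length = (factorAt u i (z.length + 1)).take z.length :=
        (factorAt_take u i z.length).symm
  _ = (z ++ [c]).take z.length := by rw [hi]
  _ = z := List.take_left

/-- A sequence of complexity `n+1` cannot have two distinct right special
factors of the same length. -/
lemma no_two_right_special (hcomp : ∀ n, complexity u n = n + 1) (n : ℕ)
    (z₁ z₂ : List Bool) (hne : z₁ ≠ z₂) (h₁ : z₁.length = n) (h₂ : z₂.length = n)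
    (f1t : IsFactor u (z₁ ++ [true])) (f1f : IsFactor u (z₁ ++ [false]))
    (f2t : IsFactor u (z₂ ++ [true])) (f2f : IsFactor u (z₂ ++ [false])) : False := by
  classical
  set ext : List Bool → List Bool := fun z =>
    if h : IsFactor u z then factorAt u h.choose (z.length + 1) else [] with hext
  have hext_spec : ∀ z ∈ Fset u n, ext z ∈ Fset u (n + 1) ∧ (ext z).take n = z := by
    rintro z ⟨hzf, hzl⟩
    have hch : factorAt u hzf.choose z.length = z := hzf.choose_spec
    have h1 : ext z = factorAt u hzf.choose (n + 1) := by
      rw [hext]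
      simp only [hzf, dif_pos, hzl]
    constructor
    · rw [h1]
      exact ⟨isFactor_factorAt u _ _, by simp⟩
    · rw [h1, factorAt_take]
      rw [← hzl, hch]
  have hinj : Set.InjOn ext (Fset u n) := by
    intro x hx y hy hxy
    have := (hext_spec x hx).2
    rw [hxy, (hext_spec y hy).2] at this
    exact this.symm
  have hmem1 : ∀ c : Bool, z₁ ++ [c] ∈ Fset u (n + 1) := by
    intro c
    cases c
    · exact ⟨f1f, by simp [h₁]⟩
    · exact ⟨f1t, by simp [h₁]⟩
  have hmem2 : ∀ c : Bool, z₂ ++ [c] ∈ Fset u (n + 1) := by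
    intro c
    cases c
    · exact ⟨f2f, by simp [h₂]⟩
    · exact ⟨f2t, by simp [h₂]⟩
  have hz₁ : z₁ ∈ Fset u n := mem_Fset_of_append f1t h₁
  have hz₂ : z₂ ∈ Fset u n := mem_Fset_of_append f2t h₂
  have hpick : ∀ z : List Bool, z ∈ Fset u n → (∀ c : Bool, z ++ [c] ∈ Fset u (n + 1)) →
      ∃ c : Bool, z ++ [c] ∈ Fset u (n + 1) ∧ z ++ [c] ∉ ext '' Fset u n := by
    intro z hz hcs
    by_cases hq : ext z = z ++ [true]
    · refine ⟨false, hcs false, ?_⟩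
      rintro ⟨y, hy, hyeq⟩
      have hyz : y = z := by
        have := (hext_spec y hy).2
        rw [hyeq] at this
        rw [← this, ← (by simpa [hz.2] using rfl : z.length = n), List.take_left]
      rw [hyz, hq] at hyeq
      have : ([true] : List Bool) = [false] := List.append_inj_right hyeq rfl
      simpa using this
    · refine ⟨true, hcs true, ?_⟩
      rintro ⟨y, hy, hyeq⟩
      have hyz : y = z := by
        have := (hext_spec y hy).2
        rw [hyeq] at this
        rw [← this, ← (by simpa [hz.2] using rfl : z.length = n), List.take_left]
      rw [hyz] at hyeq
      exact hq hyeq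
  obtain ⟨c₁, hc₁mem, hc₁img⟩ := hpick z₁ hz₁ hmem1
  obtain ⟨c₂, hc₂mem, hc₂img⟩ := hpick z₂ hz₂ hmem2
  have hX₁₂ : z₁ ++ [c₁] ≠ z₂ ++ [c₂] := by
    intro h
    exact hne (List.append_inj_left h (by omega))
  have himgsub : ext '' Fset u n ⊆ Fset u (n + 1) := by
    rintro _ ⟨z, hz, rfl⟩
    exact (hext_spec z hz).1
  have hfin : (ext '' Fset u n).Finite := (Fset_finite n).image _
  have hcard_img : (ext '' Fset u n).ncard = n + 1 := by
    rw [Set.ncard_image_of_injOn hinj, ncard_Fset hcomp]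
  have hsub : insert (z₁ ++ [c₁]) (insert (z₂ ++ [c₂]) (ext '' Fset u n)) ⊆
      Fset u (n + 1) := by
    intro z hz
    rcases hz with rfl | rfl | hz
    · exact hc₁mem
    · exact hc₂mem
    · exact himgsub hz
  have hcard : (insert (z₁ ++ [c₁]) (insert (z₂ ++ [c₂]) (ext '' Fset u n))).ncard
      = n + 3 := by
    rw [Set.ncard_insert_of_notMem (by
        intro h
        rcases h with h | h
        · exact hX₁₂ h
        · exact hc₁img h) (hfin.insert _),
      Set.ncard_insert_of_notMem hc₂img hfin, hcard_img]
  have hle := Set.ncard_le_ncard hsub (Fset_finite (n + 1))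
  rw [hcard, ncard_Fset hcomp] at hle
  omega

end RightSpecialCount
section Gaps

variable {u : ℕ → Bool}

/-- A gap of size `γ` between consecutive `bb` occurrences starting at `k`. -/
def HasGap (u : ℕ → Bool) (k γ : ℕ) : Prop :=
  BB u k ∧ BB u (k + 2 * γ + 1) ∧ 1 ≤ γ ∧
    ∀ s, 1 ≤ s → s ≤ 2 * γ + 1 → u (k + s) = decide (s % 2 = 1)

lemma hasGap_of_consec (hAA : ∀ k, u k = false → u (k + 1) = true)
    (hBBB : ∀ k, ¬(u k = true ∧ u (k + 1) = true ∧ u (k + 2) = true))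
    {k k' : ℕ} (hk : BB u k) (hk' : BB u k') (hlt : k < k')
    (hcons : ∀ t, k < t → t < k' → ¬ BB u t) :
    ∃ γ, k' = k + 2 * γ + 1 ∧ HasGap u k γ := by
  obtain ⟨γ, hγ1, hγ2, hγ3⟩ := gap_structure hAA hBBB hk hk' hlt hcons
  exact ⟨γ, hγ2, hk, hγ2 ▸ hk', hγ1, hγ3⟩

lemma isFactor_ext (i : ℕ) {z : List Bool} {c : Bool}
    (h : factorAt u i z.length = z) (hc : u (i + z.length) = c) :
    IsFactor u (z ++ [c]) := by
  refine ⟨i, ?_⟩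
  rw [show (z ++ [c]).length = z.length + 1 from by simp, factorAt_succ, h, hc]

/-- Two gap sizes can never differ by 2 or more. -/
lemma gaps_close (hcomp : ∀ n, complexity u n = n + 1)
    {k γ κ γ' : ℕ} (h1 : HasGap u k γ) (h2 : HasGap u κ γ') (hlt : γ + 2 ≤ γ') :
    False := by
  obtain ⟨hbk, hbk', hγ1, pat1⟩ := h1
  obtain ⟨hbκ, hbκ', hγ'1, pat2⟩ := h2
  set z₁ : List Bool := factorAt u k (2 * γ + 2) with hz₁
  set z₂ : List Bool := factorAt u (κ + 2) (2 * γ + 2) with hz₂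
  have hlen₁ : z₁.length = 2 * γ + 2 := by simp [hz₁]
  have hlen₂ : z₂.length = 2 * γ + 2 := by simp [hz₂]
  have hκ2 : u (κ + 2) = false := by
    rw [pat2 2 (by omega) (by omega)]
    simp
  have hne : z₁ ≠ z₂ := by
    intro h
    rw [hz₁, hz₂, factorAt_eq_factorAt_iff] at h
    have h0 := h 0 (by omega)
    rw [Nat.add_zero, Nat.add_zero, hbk.1, hκ2] at h0
    exact Bool.true_eq_false.mp h0
  -- z₁ ++ [true] at k
  have f1t : IsFactor u (z₁ ++ [true]) := by
    apply isFactor_ext k (by rw [hlen₁])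
    rw [hlen₁, show k + (2 * γ + 2) = (k + 2 * γ + 1) + 1 from by ring]
    exact hbk'.2
  -- z₁ ++ [false] at κ
  have hocc1 : factorAt u κ (2 * γ + 2) = z₁ := by
    rw [hz₁, factorAt_eq_factorAt_iff]
    intro s hs
    rcases Nat.eq_zero_or_pos s with rfl | hs1
    · rw [Nat.add_zero, Nat.add_zero, hbκ.1, hbk.1]
    · rw [pat2 s hs1 (by omega), pat1 s hs1 (by omega)]
  have f1f : IsFactor u (z₁ ++ [false]) := by
    apply isFactor_ext κ (by rw [hlen₁]; exact hocc1)
    rw [hlen₁, show κ + (2 * γ + 2) = κ + (2 * γ + 2) from rfl,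
      pat2 (2 * γ + 2) (by omega) (by omega)]
    simp
  -- z₂ ++ [false] at κ + 2
  have f2f : IsFactor u (z₂ ++ [false]) := by
    apply isFactor_ext (κ + 2) (by rw [hlen₂])
    rw [hlen₂, show κ + 2 + (2 * γ + 2) = κ + (2 * γ + 4) from by ring,
      pat2 (2 * γ + 4) (by omega) (by omega)]
    simp
  -- z₂ ++ [true] at κ + 2 * (γ' - γ)
  have hocc2 : factorAt u (κ + 2 * (γ' - γ)) (2 * γ + 2) = z₂ := by
    rw [hz₂, factorAt_eq_factorAt_iff]
    intro s hs
    rw [show κ + 2 * (γ' - γ) + s = κ + (2 * (γ' - γ) + s) from by ring,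
      show κ + 2 + s = κ + (2 + s) from by ring,
      pat2 (2 * (γ' - γ) + s) (by omega) (by omega),
      pat2 (2 + s) (by omega) (by omega)]
    congr 1
    have : (2 * (γ' - γ) + s) % 2 = (2 + s) % 2 := by omega
    rw [this]
  have f2t : IsFactor u (z₂ ++ [true]) := by
    apply isFactor_ext (κ + 2 * (γ' - γ)) (by rw [hlen₂]; exact hocc2)
    rw [hlen₂, show κ + 2 * (γ' - γ) + (2 * γ + 2) = (κ + 2 * γ' + 1) + 1 from by omega]
    exact hbκ'.2
  exact no_two_right_special hcomp (2 * γ + 2) z₁ z₂ hne hlen₁ hlen₂ f1t f1f f2t f2f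

end Gaps
section Density

variable {u : ℕ → Bool}

lemma bb_unbounded (hap : ¬ EventuallyPeriodic u)
    (hAA : ∀ k, u k = false → u (k + 1) = true) :
    ∀ N, ∃ k, N ≤ k ∧ BB u k := by
  intro N
  by_contra h
  push_neg at h
  apply hap
  refine ⟨2, by norm_num, N, fun n hn => ?_⟩
  cases hun : u n with
  | false =>
    have h1 : u (n + 1) = true := hAA n hun
    have h2 : u (n + 2) = false := by
      cases h' : u (n + 2) with
      | false => rfl
      | true => exact absurd ⟨h1, h'⟩ (h (n + 1) (by omega))
    rw [h2]
  | true =>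
    have h1 : u (n + 1) = false := by
      cases h' : u (n + 1) with
      | false => rfl
      | true => exact absurd ⟨hun, h'⟩ (h n hn)
    have h2 : u (n + 2) = true := hAA (n + 1) h1
    rw [h2]

lemma next_bb (hap : ¬ EventuallyPeriodic u)
    (hAA : ∀ k, u k = false → u (k + 1) = true) (k : ℕ) :
    ∃ k', k < k' ∧ BB u k' ∧ ∀ m, k < m → m < k' → ¬ BB u m := by
  classical
  have hex : ∃ k', k < k' ∧ BB u k' := by
    obtain ⟨k', h1, h2⟩ := bb_unbounded hap hAA (k + 1)
    exact ⟨k', by omega, h2⟩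
  refine ⟨Nat.find hex, (Nat.find_spec hex).1, (Nat.find_spec hex).2, ?_⟩
  intro m hm1 hm2 hbbm
  exact Nat.find_min hex hm2 ⟨hm1, hbbm⟩

/-- Enumeration of `bb` occurrences starting from a given one. -/
lemma bb_enum (hap : ¬ EventuallyPeriodic u)
    (hAA : ∀ k, u k = false → u (k + 1) = true)
    (hBBB : ∀ k, ¬(u k = true ∧ u (k + 1) = true ∧ u (k + 2) = true))
    {k₀ : ℕ} (h0 : BB u k₀) :
    ∃ Q : ℕ → ℕ, Q 0 = k₀ ∧ (∀ t, BB u (Q t)) ∧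
      ∀ t, ∃ γ, HasGap u (Q t) γ ∧ Q (t + 1) = Q t + 2 * γ + 1 := by
  choose f h1 h2 h3 using next_bb hap hAA
  refine ⟨fun t => f^[t] k₀, Function.iterate_zero_apply f k₀, ?_, ?_⟩
  · intro t
    induction t with
    | zero => simpa using h0
    | succ t ih =>
      show BB u (f^[t + 1] k₀)
      rw [Function.iterate_succ_apply']
      exact h2 _
  · intro t
    have hbbt : BB u (f^[t] k₀) := by
      induction t with
      | zero => simpa using h0
      | succ t ih =>
        rw [Function.iterate_succ_apply']
        exact h2 _
    obtain ⟨γ, hγeq, hγ⟩ := hasGap_of_consec hAA hBBB hbbt (h2 (f^[t] k₀))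
      (h1 (f^[t] k₀)) (h3 (f^[t] k₀))
    refine ⟨γ, hγ, ?_⟩
    show f^[t + 1] k₀ = f^[t] k₀ + 2 * γ + 1
    rw [Function.iterate_succ_apply', ← hγeq]

/-- From the gap and count recursions, a linear lower bound forces a lower density bound. -/
lemma density_low (hap : ¬ EventuallyPeriodic u)
    (hAA : ∀ k, u k = false → u (k + 1) = true)
    (hBBB : ∀ k, ¬(u k = true ∧ u (k + 1) = true ∧ u (k + 2) = true))
    {ρb : ℝ} (hfb : HasFreq u true ρb) {k₀ : ℕ} (h0 : BB u k₀) (A : ℕ)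
    (hgap : ∀ k γ, HasGap u k γ → γ ≤ A) :
    ((A : ℝ) + 1) / (2 * A + 1) ≤ ρb := by
  obtain ⟨Q, hQ0, hQbb, hQgap⟩ := bb_enum hap hAA hBBB h0
  have hstep : ∀ t, ∃ γ, γ ≤ A ∧ Q (t + 1) = Q t + 2 * γ + 1 ∧
      countBefore u true (Q (t + 1)) = countBefore u true (Q t) + (γ + 1) := by
    intro t
    obtain ⟨γ, hγ, heq⟩ := hQgap t
    refine ⟨γ, hgap _ _ hγ, heq, ?_⟩
    rw [heq]
    exact gap_count (hQbb t).1 hγ.2.2.1 hγ.2.2.2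
  have hQmono : ∀ t, Q t ≤ Q (t + 1) := by
    intro t
    obtain ⟨γ, _, heq, _⟩ := hstep t
    omega
  have hQ0le : ∀ t, Q 0 ≤ Q t := by
    intro t
    induction t with
    | zero => exact le_refl _
    | succ t ih => exact le_trans ih (hQmono t)
  have hQget : ∀ t, t ≤ Q t := by
    intro t
    induction t with
    | zero => omega
    | succ t ih =>
      obtain ⟨γ, _, heq, _⟩ := hstep t
      omega
  have key : ∀ t, (2 * A + 1) * countBefore u true (Q t) + (A + 1) * Q 0 ≥
      (2 * A + 1) * countBefore u true (Q 0) + (A + 1) * Q t := by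
    intro t
    induction t with
    | zero => omega
    | succ t ih =>
      obtain ⟨γ, hγA, heq, hcnt⟩ := hstep t
      rw [hcnt, heq]
      nlinarith
  -- pass to the limit
  have hQtend : Filter.Tendsto Q Filter.atTop Filter.atTop :=
    tendsto_atTop_mono hQget tendsto_id
  have hfb' : Filter.Tendsto (fun t => (countBefore u true (Q t) : ℝ) / (Q t : ℝ))
      Filter.atTop (nhds ρb) := ((hasFreq_iff u true ρb).mp hfb).comp hQtend
  have hQcast : Filter.Tendsto (fun t => ((Q t : ℕ) : ℝ)) Filter.atTop Filter.atTop :=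
    tendsto_natCast_atTop_atTop.comp hQtend
  set α : ℝ := ((A : ℝ) + 1) / (2 * A + 1) with hα
  set D : ℝ := (countBefore u true (Q 0) : ℝ) - α * Q 0 with hD
  have hrhs : Filter.Tendsto (fun t => α + D / (Q t : ℝ)) Filter.atTop (nhds (α + 0)) :=
    tendsto_const_nhds.add (Filter.Tendsto.div_atTop tendsto_const_nhds hQcast)
  rw [add_zero] at hrhs
  refine le_of_tendsto_of_tendsto hrhs hfb' ?_
  filter_upwards [Filter.eventually_ge_atTop 1] with t ht
  have hQpos : (0 : ℝ) < (Q t : ℝ) := by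
    have h1t : 1 ≤ Q t := le_trans ht (hQget t)
    exact_mod_cast Nat.lt_of_lt_of_le Nat.zero_lt_one h1t
  have hkey := key t
  have h2A : (0 : ℝ) < 2 * (A : ℝ) + 1 := by positivity
  have hkeyR : (2 * (A : ℝ) + 1) * (countBefore u true (Q t) : ℝ) + ((A : ℝ) + 1) * (Q 0 : ℝ)
      ≥ (2 * (A : ℝ) + 1) * (countBefore u true (Q 0) : ℝ) + ((A : ℝ) + 1) * (Q t : ℝ) := by
    exact_mod_cast hkey
  have hαQ : α * (2 * (A : ℝ) + 1) = (A : ℝ) + 1 := by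
    rw [hα]
    field_simp
  have hlow : (countBefore u true (Q t) : ℝ) ≥ α * (Q t : ℝ) + D := by
    rw [hD]
    nlinarith
  rw [← sub_nonneg]
  have : (countBefore u true (Q t) : ℝ) / (Q t : ℝ) - (α + D / (Q t : ℝ))
      = ((countBefore u true (Q t) : ℝ) - (α * Q t + D)) / (Q t : ℝ) := by
    field_simp
    try ring
  rw [this]
  apply div_nonneg _ (le_of_lt hQpos)
  linarith

lemma density_high (hap : ¬ EventuallyPeriodic u)
    (hAA : ∀ k, u k = false → u (k + 1) = true)
    (hBBB : ∀ k, ¬(u k = true ∧ u (k + 1) = true ∧ u (k + 2) = true))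
    {ρb : ℝ} (hfb : HasFreq u true ρb) {k₀ : ℕ} (h0 : BB u k₀) (A : ℕ)
    (hgap : ∀ k γ, HasGap u k γ → A + 1 ≤ γ) :
    ρb ≤ ((A : ℝ) + 2) / (2 * A + 3) := by
  obtain ⟨Q, hQ0, hQbb, hQgap⟩ := bb_enum hap hAA hBBB h0
  have hstep : ∀ t, ∃ γ, A + 1 ≤ γ ∧ Q (t + 1) = Q t + 2 * γ + 1 ∧
      countBefore u true (Q (t + 1)) = countBefore u true (Q t) + (γ + 1) := by
    intro t
    obtain ⟨γ, hγ, heq⟩ := hQgap t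
    refine ⟨γ, hgap _ _ hγ, heq, ?_⟩
    rw [heq]
    exact gap_count (hQbb t).1 hγ.2.2.1 hγ.2.2.2
  have hQget : ∀ t, t ≤ Q t := by
    intro t
    induction t with
    | zero => omega
    | succ t ih =>
      obtain ⟨γ, _, heq, _⟩ := hstep t
      omega
  have key : ∀ t, (2 * A + 3) * countBefore u true (Q t) + (A + 2) * Q 0 ≤
      (2 * A + 3) * countBefore u true (Q 0) + (A + 2) * Q t := by
    intro t
    induction t with
    | zero => omega
    | succ t ih =>
      obtain ⟨γ, hγA, heq, hcnt⟩ := hstep t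
      rw [hcnt, heq]
      nlinarith
  have hQtend : Filter.Tendsto Q Filter.atTop Filter.atTop :=
    tendsto_atTop_mono hQget tendsto_id
  have hfb' : Filter.Tendsto (fun t => (countBefore u true (Q t) : ℝ) / (Q t : ℝ))
      Filter.atTop (nhds ρb) := ((hasFreq_iff u true ρb).mp hfb).comp hQtend
  have hQcast : Filter.Tendsto (fun t => ((Q t : ℕ) : ℝ)) Filter.atTop Filter.atTop :=
    tendsto_natCast_atTop_atTop.comp hQtend
  set α : ℝ := ((A : ℝ) + 2) / (2 * A + 3) with hα
  set D : ℝ := (countBefore u true (Q 0) : ℝ) - α * Q 0 with hD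
  have hrhs : Filter.Tendsto (fun t => α + D / (Q t : ℝ)) Filter.atTop (nhds (α + 0)) :=
    tendsto_const_nhds.add (Filter.Tendsto.div_atTop tendsto_const_nhds hQcast)
  rw [add_zero] at hrhs
  refine le_of_tendsto_of_tendsto hfb' hrhs ?_
  filter_upwards [Filter.eventually_ge_atTop 1] with t ht
  have hQpos : (0 : ℝ) < (Q t : ℝ) := by
    have h1t : 1 ≤ Q t := le_trans ht (hQget t)
    exact_mod_cast Nat.lt_of_lt_of_le Nat.zero_lt_one h1t
  have hkey := key t
  have h2A : (0 : ℝ) < 2 * (A : ℝ) + 3 := by positivity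
  have hkeyR : (2 * (A : ℝ) + 3) * (countBefore u true (Q t) : ℝ) + ((A : ℝ) + 2) * (Q 0 : ℝ)
      ≤ (2 * (A : ℝ) + 3) * (countBefore u true (Q 0) : ℝ) + ((A : ℝ) + 2) * (Q t : ℝ) := by
    exact_mod_cast hkey
  have hαQ : α * (2 * (A : ℝ) + 3) = (A : ℝ) + 2 := by
    rw [hα]
    field_simp
  have hhigh : (countBefore u true (Q t) : ℝ) ≤ α * (Q t : ℝ) + D := by
    rw [hD]
    nlinarith
  rw [← sub_nonneg]
  have heq2 : (α + D / (Q t : ℝ)) - (countBefore u true (Q t) : ℝ) / (Q t : ℝ)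
      = ((α * Q t + D) - (countBefore u true (Q t) : ℝ)) / (Q t : ℝ) := by
    field_simp
    try ring
  rw [heq2]
  apply div_nonneg _ (le_of_lt hQpos)
  linarith

end Density
section GapRange

variable {u : ℕ → Bool}

lemma gap_range (hap : ¬ EventuallyPeriodic u) (hcomp : ∀ n, complexity u n = n + 1)
    (hAA : ∀ k, u k = false → u (k + 1) = true)
    (hBBB : ∀ k, ¬(u k = true ∧ u (k + 1) = true ∧ u (k + 2) = true))
    {ρb : ℝ} (hfb : HasFreq u true ρb) (A : ℕ)
    (hub : ρb < ((A : ℝ) + 1) / (2 * A + 1)) (hlb : ((A : ℝ) + 2) / (2 * A + 3) < ρb) :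
    ∀ k γ, HasGap u k γ → A ≤ γ ∧ γ ≤ A + 1 := by
  intro k γ hγ
  constructor
  · by_contra h
    push_neg at h
    have hall : ∀ k' γ', HasGap u k' γ' → γ' ≤ A := by
      intro k' γ' hγ'
      by_contra h'
      push_neg at h'
      exact gaps_close hcomp hγ hγ' (by omega)
    have := density_low hap hAA hBBB hfb hγ.1 A hall
    linarith
  · by_contra h
    push_neg at h
    have hall : ∀ k' γ', HasGap u k' γ' → A + 1 ≤ γ' := by
      intro k' γ' hγ'
      by_contra h'
      push_neg at h'
      exact gaps_close hcomp hγ' hγ (by omega)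
    have := density_high hap hAA hBBB hfb hγ.1 A hall
    linarith

/-- Decomposition of an interval between two `bb` occurrences. -/
lemma chain (hap : ¬ EventuallyPeriodic u)
    (hAA : ∀ k, u k = false → u (k + 1) = true)
    (hBBB : ∀ k, ¬(u k = true ∧ u (k + 1) = true ∧ u (k + 2) = true))
    (A : ℕ) (hrange : ∀ k γ, HasGap u k γ → A ≤ γ ∧ γ ≤ A + 1) :
    ∀ d i j, j - i = d → i < j → BB u i → BB u j →
      ∃ S m, 1 ≤ m ∧ countBefore u true j = countBefore u true i + S ∧
        (A + 1) * m ≤ S ∧ S ≤ (A + 2) * m ∧ j - i + m = 2 * S := by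
  intro d
  induction d using Nat.strong_induction_on with
  | _ d ih =>
    intro i j hd hij hbi hbj
    obtain ⟨k', hik', hbk', hmin⟩ := next_bb hap hAA i
    have hk'j : k' ≤ j := by
      by_contra h
      push_neg at h
      exact hmin j hij h hbj
    obtain ⟨γ, hγeq, hγ⟩ := hasGap_of_consec hAA hBBB hbi hbk' hik' hmin
    have hγr := hrange i γ hγ
    have hcnt1 : countBefore u true k' = countBefore u true i + (γ + 1) := by
      rw [hγeq]
      exact gap_count hbi.1 hγ.2.2.1 hγ.2.2.2
    rcases eq_or_lt_of_le hk'j with rfl | hk'lt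
    · exact ⟨γ + 1, 1, le_refl 1, hcnt1, by omega, by omega, by omega⟩
    · obtain ⟨S₂, m₂, hm₂, hcnt₂, hlb₂, hub₂, hlen₂⟩ :=
        ih (j - k') (by omega) k' j rfl hk'lt hbk' hbj
      refine ⟨γ + 1 + S₂, 1 + m₂, by omega, ?_, ?_, ?_, ?_⟩
      · rw [hcnt₂, hcnt1]
        ring
      · have : (A + 1) * (1 + m₂) = (A + 1) + (A + 1) * m₂ := by ring
        omega
      · have : (A + 2) * (1 + m₂) = (A + 2) + (A + 2) * m₂ := by ring
        omega
      · omega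

end GapRange
theorem statement10 (δ : ℕ) (hδ : 6 ≤ δ) (u : ℕ → Bool) (hu : IsStandard u)
    (θ : ℝ) (hθ : HasSlope u θ) (a : ℕ → ℕ) (hcf : HasCF θ a)
    (ha1 : a 1 = 1) (ha2 : a 2 = δ / 2)
    (w : List (ZMod δ ⊕ ZMod δ)) (hlen : w.length = 2)
    (hw : ∀ x ∈ w, ∃ c : ZMod δ, x = Sum.inr c)
    (i j : ℕ) (hij : i < j)
    (hi : OccursAt (colourCyc δ u) w i) (hj : OccursAt (colourCyc δ u) w j) :
    4 * δ - 4 < j - i := by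
  haveI : NeZero δ := ⟨by omega⟩
  obtain ⟨hstu, _, _⟩ := hu
  obtain ⟨hap, hcomp⟩ := hstu
  obtain ⟨ρa, ρb, hfa, hfb, hab, h2a, hlbρ, hubρ⟩ :=
    slope_package (u := u) δ hδ θ hθ a hcf ha1 ha2
  set A : ℕ := δ / 2 with hA
  -- decode the occurrences
  obtain ⟨x0, x1, rfl⟩ := List.length_eq_two.mp hlen
  obtain ⟨c0, hc0⟩ := hw x0 (by simp)
  obtain ⟨c1, hc1⟩ := hw x1 (by simp)
  rw [OccursAt, show ([x0, x1] : List (ZMod δ ⊕ ZMod δ)).length = 2 from rfl,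
    factorAt_two_gen] at hi hj
  have hvi0 : colourCyc δ u i = x0 := (List.cons.injEq _ _ _ _ ▸ hi).1
  have hvi1 : colourCyc δ u (i + 1) = x1 := by
    have := hi
    simp only [List.cons.injEq] at this
    exact this.2.1
  have hvj0 : colourCyc δ u j = x0 := by
    have := hj
    simp only [List.cons.injEq] at this
    exact this.1
  have hvj1 : colourCyc δ u (j + 1) = x1 := by
    have := hj
    simp only [List.cons.injEq] at this
    exact this.2.1
  -- the underlying letters are all b
  have decode : ∀ n (c : ZMod δ), colourCyc δ u n = Sum.inr c →
      u n = true ∧ (countBefore u true n : ZMod δ) = c := by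
    intro n c h
    unfold colourCyc colour at h
    by_cases hn : u n = false
    · rw [if_pos hn] at h
      exact absurd h (by simp)
    · rw [if_neg hn] at h
      refine ⟨bool_eq_true hn, ?_⟩
      have := Sum.inr.inj h
      rw [← this]
      rfl
  have hui0 := decode i c0 (hc0 ▸ hvi0)
  have hui1 := decode (i + 1) c1 (hc1 ▸ hvi1)
  have huj0 := decode j c0 (hc0 ▸ hvj0)
  have huj1 := decode (j + 1) c1 (hc1 ▸ hvj1)
  have hbi : BB u i := ⟨hui0.1, hui1.1⟩
  have hbj : BB u j := ⟨huj0.1, huj1.1⟩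
  -- structural facts
  have hAA := noAA hap hcomp hfa hfb hab
  have hBBB := noBBB hap hcomp hfa hfb hab h2a ⟨i, hbi.1, hbi.2⟩
  have hrange := gap_range hap hcomp hAA hBBB hfb A hubρ hlbρ
  obtain ⟨S, m, hm1, hcntS, hSlb, hSub, hlenS⟩ :=
    chain hap hAA hBBB A hrange (j - i) i j rfl hij hbi hbj
  -- δ divides S
  have hdvd : δ ∣ S := by
    have hmod : ((countBefore u true i : ZMod δ)) = ((countBefore u true j : ZMod δ)) := by
      rw [hui0.2, huj0.2]
    rw [hcntS] at hmod
    push_cast at hmod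
    have : (S : ZMod δ) = 0 := by
      have := hmod.symm
      rwa [add_eq_left] at this
    exact (ZMod.natCast_eq_zero_iff S δ).mp this
  -- A is at least 3
  have hA3 : 3 ≤ A := by omega
  have hS1 : 1 ≤ S := by
    have h0 : (A + 1) * 1 ≤ (A + 1) * m := Nat.mul_le_mul_left _ hm1
    have h1 : (A + 1) * 1 = A + 1 := mul_one _
    omega
  have hSδ : δ ≤ S := Nat.le_of_dvd (by omega) hdvd
  -- S = δ is impossible
  have hSne : S ≠ δ := by
    intro hSeq
    have hm2 : m = 1 := by
      by_contra hm'
      have h2m : 2 ≤ m := by omega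
      have h3 : (A + 1) * 2 ≤ (A + 1) * m := Nat.mul_le_mul_left _ h2m
      omega
    rw [hm2, mul_one] at hSub
    omega
  have hS2δ : 2 * δ ≤ S := by
    obtain ⟨c, hc⟩ := hdvd
    have hc1 : c ≠ 0 := by
      intro h
      rw [h, mul_zero] at hc
      omega
    have hc2 : c ≠ 1 := by
      intro h
      rw [h, mul_one] at hc
      exact hSne hc
    have h3 : δ * 2 ≤ δ * c := Nat.mul_le_mul_left δ (by omega)
    omega
  -- final arithmetic
  have hmδ : m * (δ + 1) ≤ 2 * S := by
    have h1 : m * (δ + 1) ≤ m * (2 * (A + 1)) := Nat.mul_le_mul_left _ (by omega)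
    have h2 : m * (2 * (A + 1)) = 2 * ((A + 1) * m) := by ring
    omega
  set L : ℕ := j - i with hLdef
  have key : 2 * S * δ ≤ L * (δ + 1) := by
    have h3 : L * (δ + 1) + m * (δ + 1) = 2 * S * δ + 2 * S := by
      rw [← add_mul, hlenS]
      ring
    omega
  have key2 : 4 * δ * δ ≤ 2 * S * δ := by
    have h4 : (2 * δ) * δ ≤ S * δ := mul_le_mul_left hS2δ δ
    have h5 : (2 * δ) * δ * 2 = 4 * δ * δ := by ring
    have h6 : S * δ * 2 = 2 * S * δ := by ring
    calc 4 * δ * δ = (2 * δ) * δ * 2 := by rw [h5]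
    _ ≤ S * δ * 2 := mul_le_mul_left h4 2
    _ = 2 * S * δ := h6
  by_contra hcon
  push_neg at hcon
  have h5 : L * (δ + 1) ≤ (4 * δ - 4) * (δ + 1) := mul_le_mul_left hcon _
  have h6 : (4 * δ - 4) * (δ + 1) + 4 * (δ + 1) = 4 * δ * (δ + 1) := by
    rw [← add_mul]
    congr 1
    omega
  have h7 : 4 * δ * (δ + 1) = 4 * δ * δ + 4 * δ := by ring
  omega
end BalancedCE
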